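/- Let Ω ⊂ ℝⁿ be a bounded open set. Suppose f ∈ L^∞(Ω) and there exist constants c > 0, ε₀ > 0, C > 0, M > 0 such that for all 0 < ε ≤ ε₀, all a > 1, all h > 0, and all z ∈ ℂⁿ with |z − 2iae₁| < 2εa, one has |∫_Ω f(x) e^{−(mi/h) x·z} dx| ≤ C e^{−ca/(4h)} e^{Mεa/h}. Then choosing ε < c/(8M), the Fourier–Laplace transform of f (extended by 0) decays exponentially in the region {Im w in a fixed open cone around the direction e₁}, i.e., |∫_Ω f(x) e^{−i x·w} dx| ≤ C e^{−c'|Im w|} for all w in a complex cone with axis 2i e₁, for some c' > 0. -/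

import Mathlib

open MeasureTheory Metric Set

noncomputable section

abbrev En (n : ℕ) := EuclideanSpace ℝ (Fin n)

/-- Partial derivative in the `i`-th coordinate direction. -/
def pd {n : ℕ} (i : Fin n) (f : En n → ℂ) (x : En n) : ℂ :=
  fderiv ℝ f x (EuclideanSpace.single i 1)

/-- Laplacian of a complex-valued function. -/
def lap {n : ℕ} (f : En n → ℂ) (x : En n) : ℂ :=
  ∑ i : Fin n, fderiv ℝ (fun y => pd i f y) x (EuclideanSpace.single i 1)

/-- Bilinear (non-conjugated) dot product of the gradients. -/
def gradDot {n : ℕ} (f g : En n → ℂ) (x : En n) : ℂ :=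
  ∑ i : Fin n, pd i f x * pd i g x

/-- Directional derivative `ω·∇f` along a real vector `ω`. -/
def dirD {n : ℕ} (ω : En n) (f : En n → ℂ) (x : En n) : ℂ :=
  ∑ i : Fin n, (ω i : ℂ) * pd i f x

/-- Norm of the imaginary part of a complex vector. -/
def imNorm {n : ℕ} (w : EuclideanSpace ℂ (Fin n)) : ℝ :=
  Real.sqrt (∑ i, (w i).im ^ 2)

set_option maxHeartbeats 1000000 in
theorem stmt17 {n : ℕ} (hn : 2 ≤ n) (Ω : Set (En n)) (hΩo : IsOpen Ω)
    (hΩb : Bornology.IsBounded Ω) (m : ℕ) (hm : 2 ≤ m)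
    (f : En n → ℂ) (hf : MemLp f ⊤ (volume.restrict Ω))
    (c ε₀ C M : ℝ) (hc : 0 < c) (hε₀ : 0 < ε₀) (hC : 0 < C) (hM : 0 < M)
    (hbound : ∀ ε : ℝ, 0 < ε → ε ≤ ε₀ → ∀ a : ℝ, 1 < a → ∀ h : ℝ, 0 < h →
      ∀ z : EuclideanSpace ℂ (Fin n),
        ‖z - (a : ℂ) • EuclideanSpace.single (⟨0, by omega⟩ : Fin n) (2 * Complex.I)‖ < 2 * ε * a →
        ‖∫ x in Ω, f x * Complex.exp (-((m : ℂ) * Complex.I / (h : ℂ)) *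
            ∑ i, (x i : ℂ) * z i)‖ ≤
          C * Real.exp (-(c * a) / (4 * h)) * Real.exp (M * ε * a / h)) :
    ∀ ε : ℝ, 0 < ε → ε ≤ ε₀ → ε < c / (8 * M) →
      ∃ c' : ℝ, 0 < c' ∧ ∃ C' : ℝ, 0 < C' ∧
        ∀ w : EuclideanSpace ℂ (Fin n),
          (∃ s : ℝ, 0 < s ∧
            ‖w - (s : ℂ) • EuclideanSpace.single (⟨0, by omega⟩ : Fin n) (2 * Complex.I)‖
              < 2 * ε * s) →
          ‖∫ x in Ω, f x * Complex.exp (-Complex.I * ∑ i, (x i : ℂ) * w i)‖ ≤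
            C' * Real.exp (-c' * imNorm w) := by

  intro ε hε hεε₀ hεc
  have hmpos : (0:ℝ) < m := by
    have : (2:ℕ) ≤ m := hm
    positivity
  refine ⟨c / (16 * m * (1 + ε)), by positivity, C, hC, ?_⟩
  rintro w ⟨s, hs, hws⟩
  set i0 : Fin n := ⟨0, by omega⟩ with hi0
  have hs0 : s ≠ 0 := ne_of_gt hs
  set h : ℝ := 2 * m / s with hh
  have hhpos : 0 < h := by positivity
  set z : EuclideanSpace ℂ (Fin n) := ((2/s : ℝ):ℂ) • w with hz
  have hsingle : ‖EuclideanSpace.single i0 (2 * Complex.I)‖ = 2 := by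
    rw [EuclideanSpace.norm_single]
    simp [map_mul]
  have hznear : ‖z - (2:ℂ) • EuclideanSpace.single i0 (2 * Complex.I)‖ < 2 * ε * 2 := by
    have heq : z - (2:ℂ) • EuclideanSpace.single i0 (2 * Complex.I)
        = ((2/s : ℝ):ℂ) • (w - (s:ℂ) • EuclideanSpace.single i0 (2 * Complex.I)) := by
      rw [smul_sub, smul_smul]
      congr 2
      have hsc : (s:ℂ) ≠ 0 := by exact_mod_cast hs0
      push_cast
      field_simp
    rw [heq, norm_smul]
    have h1 : ‖((2/s : ℝ):ℂ)‖ = 2/s := by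
      rw [Complex.norm_real, Real.norm_eq_abs, abs_of_pos (by positivity)]
    rw [h1]
    calc 2/s * ‖w - (s:ℂ) • EuclideanSpace.single i0 (2 * Complex.I)‖
        < 2/s * (2 * ε * s) := by
          apply mul_lt_mul_of_pos_left hws (by positivity)
      _ = 2 * ε * 2 := by field_simp
  have key := hbound ε hε hεε₀ 2 (by norm_num) h hhpos z hznear
  have hint : (∫ x in Ω, f x * Complex.exp (-((m:ℂ) * Complex.I / (h:ℂ)) * ∑ i, (x i : ℂ) * z i))
      = ∫ x in Ω, f x * Complex.exp (-Complex.I * ∑ i, (x i : ℂ) * w i) := by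
    apply integral_congr_ae
    filter_upwards with x
    congr 1
    congr 1
    have hzw : ∀ i, z i = ((2/s : ℝ):ℂ) * w i := fun i => rfl
    have hsum : ∑ i, (x i : ℂ) * z i = ((2/s : ℝ):ℂ) * ∑ i, (x i : ℂ) * w i := by
      rw [Finset.mul_sum]
      exact Finset.sum_congr rfl (fun i _ => by rw [hzw i]; ring)
    rw [hsum]
    have hhc : ((h:ℝ):ℂ) = 2 * m / s := by rw [hh]; push_cast; ring
    rw [hhc]
    have hmne : ((m:ℕ):ℂ) ≠ 0 := by exact_mod_cast (by omega : m ≠ 0)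
    have hsne : ((s:ℝ):ℂ) ≠ 0 := by exact_mod_cast hs0
    push_cast
    field_simp
  rw [hint] at key
  refine key.trans ?_
  -- compare the exponential bounds
  rw [mul_assoc, ← Real.exp_add]
  apply mul_le_mul_of_nonneg_left _ (le_of_lt hC)
  apply Real.exp_le_exp.mpr
  have him : imNorm w ≤ 2 * (1 + ε) * s := by
    have h1 : imNorm w ≤ ‖w‖ := by
      rw [imNorm, EuclideanSpace.norm_eq]
      apply Real.sqrt_le_sqrt
      apply Finset.sum_le_sum
      intro i _
      have := Complex.sq_norm (w i)
      rw [Complex.normSq_apply] at this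
      have h2 : ‖w i‖^2 = (w i).re^2 + (w i).im^2 := by
        rw [this]; ring
      rw [h2]
      nlinarith [sq_nonneg (w i).re]
    have h2 : ‖w‖ ≤ ‖w - (s:ℂ) • EuclideanSpace.single i0 (2 * Complex.I)‖
        + ‖(s:ℂ) • EuclideanSpace.single i0 (2 * Complex.I)‖ := by
      have := norm_add_le (w - (s:ℂ) • EuclideanSpace.single i0 (2 * Complex.I))
        ((s:ℂ) • EuclideanSpace.single i0 (2 * Complex.I))
      simpa using this
    have h3 : ‖(s:ℂ) • EuclideanSpace.single i0 (2 * Complex.I)‖ = 2 * s := by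
      rw [norm_smul, hsingle, Complex.norm_real, Real.norm_eq_abs, abs_of_pos hs]; ring
    nlinarith [hws]
  have hMε : M * ε ≤ c / 8 := by
    have := (lt_div_iff₀ (by positivity : (0:ℝ) < 8 * M)).mp hεc
    nlinarith
  have hm0 : (m:ℝ) ≠ 0 := ne_of_gt hmpos
  have hlhs : -(c * 2) / (4 * h) + M * ε * 2 / h = (M * ε - c / 4) * (s / m) := by
    rw [hh]
    field_simp
    ring
  rw [hlhs]
  have hstep : (M * ε - c / 4) * (s / m) ≤ -(c / 8) * (s / m) := by
    apply mul_le_mul_of_nonneg_right _ (by positivity)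
    linarith
  refine hstep.trans ?_
  have hrhs : c / (16 * m * (1 + ε)) * imNorm w ≤ c / (16 * m * (1 + ε)) * (2 * (1 + ε) * s) := by
    apply mul_le_mul_of_nonneg_left him (by positivity)
  have heq2 : c / (16 * m * (1 + ε)) * (2 * (1 + ε) * s) = c / 8 * (s / m) := by
    field_simp
    ring
  nlinarith [hrhs]
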